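/- Let B ≥ 2, let n = 2n' be even, let x_1,…,x_n ∈ {1,…,B}, let π be a uniformly random permutation of {1,…,n}, and set y_i = x_{π(i)}. For 0 ≤ t < n and j ∈ {1,…,B} define p_j^t = |{i : t < i ≤ n, y_i ≤ j}|/(n−t). Then for every α > 0, Pr[ there exist j ∈ {1,…,B} and 0 ≤ t ≤ n/2 with |p_j^t − p_j^0| ≥ α ] ≤ 2B·exp(−α²·n/2). In particular, if n ≥ C·(log B)/α² for a sufficiently large universal constant C, then with high probability in B, |p_j^t − p_j^0| ≤ α simultaneously for all 0 ≤ t ≤ n/2 and all j ∈ {1,…,B}. -/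

import Mathlib

open Finset

open scoped Classical

/-- The empirical CDF at point `j ∈ {1,…,B}` (encoded as `j : Fin B`) of the last
`n - t` elements of the dataset `x` permuted by `σ`; here `n = 2 * n'`. -/
noncomputable def pCDF (B n' : ℕ) (x : Fin (2 * n') → Fin B)
    (σ : Equiv.Perm (Fin (2 * n'))) (t : ℕ) (j : Fin B) : ℝ :=
  ((Finset.univ.filter
      (fun i : Fin (2 * n') => t ≤ (i : ℕ) ∧ ((x (σ i)) : ℕ) ≤ (j : ℕ))).card : ℝ) /
    (2 * (n' : ℝ) - t)

/-- The probability, over a uniformly random permutation of the dataset, that some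
CDF value `p_j^t` with `t ≤ n/2` deviates by at least `α` from `p_j^0`. -/
noncomputable def badProb (B n' : ℕ) (x : Fin (2 * n') → Fin B) (α : ℝ) : ℝ :=
  ((Finset.univ.filter (fun σ : Equiv.Perm (Fin (2 * n')) =>
      ∃ j : Fin B, ∃ t ≤ n', α ≤ |pCDF B n' x σ t j - pCDF B n' x σ 0 j|)).card : ℝ) /
    ((Finset.univ : Finset (Equiv.Perm (Fin (2 * n')))).card : ℝ)

lemma Gpos (p : ℝ) (h0 : 0 ≤ p) (h1 : p ≤ 1) (t : ℝ) : 0 < 1 - p + p * Real.exp t := by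
  rcases eq_or_lt_of_le h0 with h | h
  · simp [← h]
  · have : 0 < p * Real.exp t := mul_pos h (Real.exp_pos t)
    nlinarith

lemma hoeff_std (p : ℝ) (h0 : 0 ≤ p) (h1 : p ≤ 1) (t : ℝ) :
    1 - p + p * Real.exp t ≤ Real.exp (p * t + t^2/8) := by
  set G : ℝ → ℝ := fun t => 1 - p + p * Real.exp t with hG
  have hGpos : ∀ t, 0 < G t := Gpos p h0 h1
  set h1f : ℝ → ℝ := fun t => p + t/4 - p * Real.exp t / G t with hh1
  set h0f : ℝ → ℝ := fun t => p * t + t^2/8 - Real.log (G t) with hh0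
  have hdG : ∀ t, HasDerivAt G (p * Real.exp t) t := by
    intro t
    exact ((Real.hasDerivAt_exp t).const_mul p).const_add (1 - p)
  have hd0 : ∀ t, HasDerivAt h0f (h1f t) t := by
    intro t
    have hlog : HasDerivAt (fun t => Real.log (G t)) (p * Real.exp t / G t) t :=
      (hdG t).log (ne_of_gt (hGpos t))
    have h2 : HasDerivAt (fun t : ℝ => p * t + t^2/8) (p + t/4) t := by
      have h3 : HasDerivAt (fun t : ℝ => p * t) p t := by
        simpa using (hasDerivAt_id t).const_mul p
      have h4 : HasDerivAt (fun t : ℝ => t^2/8) (t/4) t := by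
        have := (hasDerivAt_pow 2 t).div_const 8
        exact this.congr_deriv (by norm_num; ring)
      exact h3.add h4
    exact h2.sub hlog
  have hd1 : ∀ t, HasDerivAt h1f (1/4 - p * (1-p) * Real.exp t / (G t)^2) t := by
    intro t
    have hq : HasDerivAt (fun t => p * Real.exp t / G t)
        ((p * Real.exp t * G t - p * Real.exp t * (p * Real.exp t)) / (G t)^2) t :=
      ((Real.hasDerivAt_exp t).const_mul p).div (hdG t) (ne_of_gt (hGpos t))
    have h2 : HasDerivAt (fun t : ℝ => p + t/4) (1/4) t := by
      simpa using ((hasDerivAt_id t).div_const 4).const_add p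
    have := h2.sub hq
    refine this.congr_deriv ?_
    have : G t = 1 - p + p * Real.exp t := rfl
    field_simp
    ring
  have h1mono : Monotone h1f := by
    apply monotone_of_deriv_nonneg
    · intro t; exact (hd1 t).differentiableAt
    · intro t
      rw [(hd1 t).deriv]
      have hGt := hGpos t
      have he := Real.exp_pos t
      have key : 4 * (p * (1-p) * Real.exp t) ≤ (G t)^2 := by
        have : ((1-p) - p * Real.exp t)^2 ≥ 0 := sq_nonneg _
        have hGeq : G t = 1 - p + p * Real.exp t := rfl
        nlinarith
      obtain ⟨g, hg⟩ : ∃ g, G t = g := ⟨_, rfl⟩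
      rw [hg] at key hGt ⊢
      rw [sub_nonneg, div_le_iff₀ (by positivity)]
      linarith
  have h1zero : h1f 0 = 0 := by
    simp [hh1, hG]
  have h0zero : h0f 0 = 0 := by
    simp [hh0, hG]
  have key : ∀ t, 0 ≤ h0f t := by
    intro t
    rcases le_total 0 t with ht | ht
    · have : MonotoneOn h0f (Set.Ici 0) := by
        apply monotoneOn_of_deriv_nonneg (convex_Ici 0)
        · exact fun x _ => (hd0 x).differentiableAt.continuousAt.continuousWithinAt
        · exact fun x _ => (hd0 x).differentiableAt.differentiableWithinAt
        · intro x hx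
          rw [(hd0 x).deriv]
          rw [← h1zero]
          exact h1mono (le_of_lt (by simpa using hx))
      have := this (Set.self_mem_Ici) (Set.mem_Ici.2 ht) ht
      rwa [h0zero] at this
    · have : AntitoneOn h0f (Set.Iic 0) := by
        apply antitoneOn_of_deriv_nonpos (convex_Iic 0)
        · exact fun x _ => (hd0 x).differentiableAt.continuousAt.continuousWithinAt
        · exact fun x _ => (hd0 x).differentiableAt.differentiableWithinAt
        · intro x hx
          rw [(hd0 x).deriv]
          rw [← h1zero]
          exact h1mono (le_of_lt (by simpa using hx))
      have := this (Set.mem_Iic.2 ht) (Set.self_mem_Iic) ht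
      rwa [h0zero] at this
  have hlog : Real.log (G t) ≤ p * t + t^2/8 := by
    have h5 : (0:ℝ) ≤ p * t + t^2/8 - Real.log (G t) := key t
    linarith
  calc G t = Real.exp (Real.log (G t)) := (Real.exp_log (hGpos t)).symm
    _ ≤ Real.exp (p * t + t^2/8) := Real.exp_le_exp.2 hlog

lemma hoeff_pt (p : ℝ) (h0 : 0 ≤ p) (h1 : p ≤ 1) (t : ℝ) :
    p * Real.exp (-((1-p)*t)) + (1-p) * Real.exp (p*t) ≤ Real.exp (t^2/8) := by
  have h := hoeff_std p h0 h1 (-t)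
  have h2 := mul_le_mul_of_nonneg_left h (le_of_lt (Real.exp_pos (p * t)))
  calc p * Real.exp (-((1-p)*t)) + (1-p) * Real.exp (p*t)
      = Real.exp (p*t) * (1 - p + p * Real.exp (-t)) := by
        rw [show -((1-p)*t) = p*t + (-t) by ring, Real.exp_add]; ring
    _ ≤ Real.exp (p*t) * Real.exp (p * (-t) + (-t)^2/8) := h2
    _ = Real.exp (t^2/8) := by rw [← Real.exp_add]; congr 1; ring


def cntS {n : ℕ} (v : Fin n → Bool) : ℕ := (univ.filter (fun i => v i = true)).card

def RgeS {n : ℕ} (v : Fin n → Bool) (t : ℕ) : ℕ :=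
  (univ.filter (fun i : Fin n => t ≤ (i : ℕ) ∧ v i = true)).card

lemma RgeS_zero {n : ℕ} (v : Fin n → Bool) : RgeS v 0 = cntS v := by
  simp [RgeS, cntS]

lemma RgeS_cons {n : ℕ} (z : Bool) (w : Fin n → Bool) (t : ℕ) :
    RgeS (Fin.cons z w) (t+1) = RgeS w t := by
  unfold RgeS
  rw [Finset.card_filter, Finset.card_filter, Fin.sum_univ_succ]
  simp

lemma cntS_cons {n : ℕ} (z : Bool) (w : Fin n → Bool) :
    cntS (Fin.cons z w) = (cond z 1 0) + cntS w := by
  unfold cntS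
  rw [Finset.card_filter, Finset.card_filter, Fin.sum_univ_succ]
  cases z <;> simp

lemma card_split {n : ℕ} (P : (Fin (n+1) → Bool) → Prop) :
    (univ.filter P).card
      = (univ.filter (fun w : Fin n → Bool => P (Fin.cons true w))).card
        + (univ.filter (fun w : Fin n → Bool => P (Fin.cons false w))).card := by
  rw [Finset.card_filter, Finset.card_filter, Finset.card_filter]
  rw [← Equiv.sum_comp (Fin.consEquiv (fun _ => Bool)) (fun v => if P v then 1 else 0)]
  rw [Fintype.sum_prod_type]
  rw [Fintype.sum_bool]
  rfl

lemma cnt_card {n m : ℕ} :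
    (univ.filter (fun v : Fin n → Bool => cntS v = m)).card = n.choose m := by
  have h : (univ.filter (fun v : Fin n → Bool => cntS v = m)).card
      = ((univ : Finset (Fin n)).powersetCard m).card := by
    apply Finset.card_nbij' (fun v => univ.filter (fun i => v i = true))
      (fun S => fun i => decide (i ∈ S))
    · intro v hv
      simp only [Finset.mem_coe, mem_filter, mem_univ, true_and] at hv
      simp [Finset.mem_powersetCard, ← hv, cntS]
    · intro S hS
      simp only [Finset.mem_coe, Finset.mem_powersetCard] at hS
      refine Finset.mem_filter.mpr ⟨Finset.mem_univ _, ?_⟩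
      simp only [cntS]
      rw [← hS.2]
      congr 1
      ext i
      simp
    · intro v hv
      funext i
      simp
    · intro S hS
      ext i
      simp
  rw [h, Finset.card_powersetCard, card_univ, Fintype.card_fin]

lemma card_ge {n t : ℕ} : (univ.filter (fun i : Fin n => t ≤ (i : ℕ))).card = n - t := by
  induction n generalizing t with
  | zero => simp
  | succ n ih =>
    rw [Finset.card_filter, Fin.sum_univ_succ, ← Finset.card_filter]
    cases t with
    | zero =>
      simp only [Fin.val_zero, le_refl, if_true]
      rw [Finset.filter_true_of_mem (fun i _ => Nat.zero_le _), card_univ, Fintype.card_fin]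
      omega
    | succ t =>
      simp only [Fin.val_zero, Fin.val_succ]
      have h2 : (univ.filter (fun i : Fin n => t + 1 ≤ (i:ℕ) + 1)).card
          = (univ.filter (fun i : Fin n => t ≤ (i:ℕ))).card := by
        congr 1
        apply Finset.filter_congr
        intro i _
        constructor <;> intro h <;> omega
      simp only [show ¬ (t + 1 ≤ 0) by omega, if_false]
      rw [h2, ih]
      omega

lemma RgeS_tail {n : ℕ} (v : Fin (n+1) → Bool) (t : ℕ) :
    RgeS v (t+1) = RgeS (Fin.tail v) t := by
  conv_lhs => rw [← Fin.cons_self_tail v]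
  exact RgeS_cons _ _ _

lemma cntS_le {n : ℕ} (v : Fin n → Bool) : cntS v ≤ n := by
  calc cntS v ≤ (univ : Finset (Fin n)).card := Finset.card_filter_le _ _
    _ = n := by rw [card_univ, Fintype.card_fin]


noncomputable def cfilter {α : Type*} [Fintype α] (P : α → Prop) : ℕ :=
  (@Finset.filter α P (Classical.decPred P) Finset.univ).card

lemma cfilter_eq {α : Type*} [Fintype α] (P : α → Prop) [inst : DecidablePred P] :
    cfilter P = (univ.filter P).card := by
  unfold cfilter
  congr 1
  exact Finset.filter_congr_decidable _ _ _

lemma cfilter_congr {α : Type*} [Fintype α] {P Q : α → Prop} (h : ∀ a, P a ↔ Q a) :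
    cfilter P = cfilter Q := by
  have : P = Q := funext fun a => propext (h a)
  subst this
  rfl

lemma cfilter_mono {α : Type*} [Fintype α] {P Q : α → Prop} (h : ∀ a, P a → Q a) :
    cfilter P ≤ cfilter Q := by
  classical
  rw [cfilter_eq, cfilter_eq]
  apply Finset.card_le_card
  intro x hx
  rw [Finset.mem_filter] at hx ⊢
  exact ⟨hx.1, h x hx.2⟩

lemma cfilter_zero {α : Type*} [Fintype α] {P : α → Prop} (h : ∀ a, ¬ P a) :
    cfilter P = 0 := by
  classical
  rw [cfilter_eq]
  rw [Finset.card_eq_zero, Finset.filter_eq_empty_iff]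
  exact fun x _ => h x

lemma cfilter_cnt {n m : ℕ} : cfilter (fun v : Fin n → Bool => cntS v = m) = n.choose m := by
  classical
  rw [cfilter_eq]
  exact cnt_card

lemma cfilter_split {n : ℕ} (P : (Fin (n+1) → Bool) → Prop) :
    cfilter P = cfilter (fun w : Fin n → Bool => P (Fin.cons true w))
      + cfilter (fun w : Fin n → Bool => P (Fin.cons false w)) := by
  classical
  rw [cfilter_eq, cfilter_eq, cfilter_eq]
  exact card_split P

lemma combine (C p t₀ D : ℝ) (hC : 0 ≤ C)
    (key : p * Real.exp (-((1-p)*t₀)) + (1-p) * Real.exp (p*t₀) ≤ Real.exp (t₀^2/8)) :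
    p * C * Real.exp (-((1-p)*t₀) + D) + (1-p) * C * Real.exp (p*t₀ + D)
      ≤ C * Real.exp (t₀^2/8 + D) := by
  rw [Real.exp_add, Real.exp_add, Real.exp_add]
  have h := mul_le_mul_of_nonneg_right key (le_of_lt (Real.exp_pos D))
  nlinarith [Real.exp_pos D]

set_option maxHeartbeats 1000000 in
lemma core (s : ℝ) (hs : 0 ≤ s) :
    ∀ (T n m : ℕ), T < n → ∀ θ : ℝ,
    ((cfilter (fun v : Fin n → Bool =>
        cntS v = m ∧ ∃ t ≤ T, θ ≤ (RgeS v t : ℝ)/((n:ℝ)-(t:ℝ))) : ℕ) : ℝ)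
    ≤ (n.choose m : ℝ) *
        Real.exp (s*((m:ℝ)/(n:ℝ) - θ) + s^2/8 * ∑ u ∈ Finset.range T, 1/((n:ℝ)-1-(u:ℝ))^2) := by
  intro T
  induction T with
  | zero =>
    intro n m hTn θ
    by_cases hθ : θ ≤ (m:ℝ)/(n:ℝ)
    · calc ((cfilter (fun v : Fin n → Bool =>
            cntS v = m ∧ ∃ t ≤ 0, θ ≤ (RgeS v t : ℝ)/((n:ℝ)-(t:ℝ))) : ℕ) : ℝ)
          ≤ ((cfilter (fun v : Fin n → Bool => cntS v = m) : ℕ) : ℝ) := by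
            apply Nat.cast_le.mpr
            apply cfilter_mono
            rintro v ⟨h1, _⟩
            exact h1
        _ = (n.choose m : ℝ) := by rw [cfilter_cnt]
        _ ≤ _ := by
            apply le_mul_of_one_le_right (Nat.cast_nonneg _)
            rw [Finset.range_zero, Finset.sum_empty]
            have h1 : 0 ≤ s*((m:ℝ)/(n:ℝ) - θ) := mul_nonneg hs (by linarith)
            have h2 := Real.add_one_le_exp (s*((m:ℝ)/(n:ℝ) - θ) + s^2/8 * 0)
            linarith
    · rw [cfilter_zero (by
        rintro v ⟨hc, t, ht, hle⟩
        interval_cases t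
        rw [RgeS_zero, hc] at hle
        simp only [Nat.cast_zero, sub_zero] at hle
        exact hθ hle)]
      simp only [Nat.cast_zero]
      positivity
  | succ T ih =>
    intro n m hTn θ
    obtain ⟨n₁, rfl⟩ : ∃ n₁, n = n₁ + 1 := ⟨n-1, by omega⟩
    have hTn₁ : T < n₁ := by omega
    by_cases hm : m ≤ n₁ + 1
    swap
    · rw [cfilter_zero (by
        rintro v ⟨hc, _⟩
        exact hm (hc ▸ cntS_le v))]
      simp only [Nat.cast_zero]
      positivity
    by_cases hθ : θ ≤ (m:ℝ)/((n₁+1:ℕ):ℝ)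
    · calc ((cfilter (fun v : Fin (n₁+1) → Bool =>
            cntS v = m ∧ ∃ t ≤ T+1, θ ≤ (RgeS v t : ℝ)/(((n₁+1:ℕ):ℝ)-(t:ℝ))) : ℕ) : ℝ)
          ≤ ((cfilter (fun v : Fin (n₁+1) → Bool => cntS v = m) : ℕ) : ℝ) := by
            apply Nat.cast_le.mpr
            apply cfilter_mono
            rintro v ⟨h1, _⟩
            exact h1
        _ = ((n₁+1).choose m : ℝ) := by rw [cfilter_cnt]
        _ ≤ _ := by
            apply le_mul_of_one_le_right (Nat.cast_nonneg _)
            have h1 : 0 ≤ s*((m:ℝ)/((n₁+1:ℕ):ℝ) - θ) := mul_nonneg hs (by linarith)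
            have h2 : (0:ℝ) ≤ ∑ u ∈ Finset.range (T+1), 1/(((n₁+1:ℕ):ℝ)-1-(u:ℝ))^2 :=
              Finset.sum_nonneg (fun u _ => by positivity)
            have h3 := Real.add_one_le_exp
              (s*((m:ℝ)/((n₁+1:ℕ):ℝ) - θ)
                + s^2/8 * ∑ u ∈ Finset.range (T+1), 1/(((n₁+1:ℕ):ℝ)-1-(u:ℝ))^2)
            nlinarith [sq_nonneg s]
    · -- main case
      have hfeq : cfilter (fun v : Fin (n₁+1) → Bool =>
            cntS v = m ∧ ∃ t ≤ T+1, θ ≤ (RgeS v t : ℝ)/(((n₁+1:ℕ):ℝ)-(t:ℝ)))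
          = cfilter (fun v : Fin (n₁+1) → Bool =>
            cntS v = m ∧ ∃ t ≤ T, θ ≤ (RgeS (Fin.tail v) t : ℝ)/((n₁:ℝ)-(t:ℝ))) := by
        apply cfilter_congr
        intro v
        constructor
        · rintro ⟨hc, t, ht, hle⟩
          refine ⟨hc, ?_⟩
          match t with
          | 0 =>
            rw [RgeS_zero, hc] at hle
            simp only [Nat.cast_zero, sub_zero] at hle
            exact absurd hle hθ
          | u+1 =>
            refine ⟨u, by omega, ?_⟩
            rw [← RgeS_tail]
            have hd : ((n₁:ℝ)-(u:ℝ)) = (((n₁+1:ℕ)):ℝ)-(((u+1:ℕ)):ℝ) := by push_cast; ring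
            rw [hd]
            exact_mod_cast hle
        · rintro ⟨hc, t, ht, hle⟩
          refine ⟨hc, t+1, by omega, ?_⟩
          rw [RgeS_tail]
          have hd : (((n₁+1:ℕ)):ℝ)-(((t+1:ℕ)):ℝ) = ((n₁:ℝ)-(t:ℝ)) := by push_cast; ring
          rw [hd]
          exact_mod_cast hle
      rw [hfeq]
      rw [cfilter_split (fun v : Fin (n₁+1) → Bool =>
            cntS v = m ∧ ∃ t ≤ T, θ ≤ (RgeS (Fin.tail v) t : ℝ)/((n₁:ℝ)-(t:ℝ)))]
      have hsum : ∑ u ∈ Finset.range (T+1), 1/(((n₁+1:ℕ):ℝ)-1-(u:ℝ))^2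
          = (∑ u ∈ Finset.range T, 1/((n₁:ℝ)-1-(u:ℝ))^2) + 1/(n₁:ℝ)^2 := by
        rw [Finset.sum_range_succ']
        congr 1
        · apply Finset.sum_congr rfl
          intro u _
          congr 2
          push_cast; ring
        · congr 2
          push_cast; ring
      cases m with
      | zero =>
        have hb1 : cfilter (fun w : Fin n₁ → Bool =>
            cntS ((Fin.cons true w : Fin (n₁+1) → Bool)) = 0 ∧ ∃ t ≤ T, θ ≤ (RgeS (Fin.tail ((Fin.cons true w : Fin (n₁+1) → Bool))) t : ℝ)/((n₁:ℝ)-(t:ℝ))) = 0 := by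
          apply cfilter_zero
          rintro w ⟨hc, _⟩
          rw [cntS_cons] at hc
          simp at hc
        have hb2 : cfilter (fun w : Fin n₁ → Bool =>
            cntS ((Fin.cons false w : Fin (n₁+1) → Bool)) = 0 ∧ ∃ t ≤ T, θ ≤ (RgeS (Fin.tail ((Fin.cons false w : Fin (n₁+1) → Bool))) t : ℝ)/((n₁:ℝ)-(t:ℝ)))
            = cfilter (fun w : Fin n₁ → Bool =>
            cntS w = 0 ∧ ∃ t ≤ T, θ ≤ (RgeS w t : ℝ)/((n₁:ℝ)-(t:ℝ))) := by
          apply cfilter_congr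
          intro w
          rw [cntS_cons, Fin.tail_cons]
          simp
        rw [hb1, hb2, Nat.zero_add]
        have ih2 := ih n₁ 0 hTn₁ θ
        refine le_trans ih2 ?_
        rw [Nat.choose_zero_right, Nat.choose_zero_right, hsum]
        simp only [Nat.cast_one, one_mul, Nat.cast_zero, zero_div]
        apply Real.exp_le_exp.mpr
        have h2 : (0:ℝ) ≤ 1/(n₁:ℝ)^2 := by positivity
        nlinarith [sq_nonneg s]
      | succ m₁ =>
        have hm₁ : m₁ ≤ n₁ := by omega
        have hb1 : cfilter (fun w : Fin n₁ → Bool =>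
            cntS ((Fin.cons true w : Fin (n₁+1) → Bool)) = m₁+1 ∧ ∃ t ≤ T, θ ≤ (RgeS (Fin.tail ((Fin.cons true w : Fin (n₁+1) → Bool))) t : ℝ)/((n₁:ℝ)-(t:ℝ)))
            = cfilter (fun w : Fin n₁ → Bool =>
            cntS w = m₁ ∧ ∃ t ≤ T, θ ≤ (RgeS w t : ℝ)/((n₁:ℝ)-(t:ℝ))) := by
          apply cfilter_congr
          intro w
          rw [cntS_cons, Fin.tail_cons]
          simp only [Bool.cond_true, Bool.cond_false]
          constructor
          · rintro ⟨hc, he⟩; exact ⟨by omega, he⟩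
          · rintro ⟨hc, he⟩; exact ⟨by omega, he⟩
        have hb2 : cfilter (fun w : Fin n₁ → Bool =>
            cntS ((Fin.cons false w : Fin (n₁+1) → Bool)) = m₁+1 ∧ ∃ t ≤ T, θ ≤ (RgeS (Fin.tail ((Fin.cons false w : Fin (n₁+1) → Bool))) t : ℝ)/((n₁:ℝ)-(t:ℝ)))
            = cfilter (fun w : Fin n₁ → Bool =>
            cntS w = m₁+1 ∧ ∃ t ≤ T, θ ≤ (RgeS w t : ℝ)/((n₁:ℝ)-(t:ℝ))) := by
          apply cfilter_congr
          intro w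
          rw [cntS_cons, Fin.tail_cons]
          simp only [Bool.cond_true, Bool.cond_false]
          constructor
          · rintro ⟨hc, he⟩; exact ⟨by omega, he⟩
          · rintro ⟨hc, he⟩; exact ⟨by omega, he⟩
        rw [hb1, hb2, hsum]
        have ih1 := ih n₁ m₁ hTn₁ θ
        have ih2 := ih n₁ (m₁+1) hTn₁ θ
        set E := ∑ u ∈ Finset.range T, 1/((n₁:ℝ)-1-(u:ℝ))^2 with hE
        set p : ℝ := ((m₁:ℝ)+1)/((n₁:ℝ)+1) with hp
        set t₀ : ℝ := s/(n₁:ℝ) with ht₀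
        have hn₁pos : (0:ℝ) < (n₁:ℝ) := by
          have h9 : (1:ℕ) ≤ n₁ := by omega
          exact_mod_cast Nat.lt_of_lt_of_le Nat.zero_lt_one h9
        have hp0 : 0 ≤ p := by positivity
        have hp1 : p ≤ 1 := by
          rw [hp, div_le_one (by linarith)]
          have h9 : (m₁:ℝ) ≤ (n₁:ℝ) := by exact_mod_cast hm₁
          linarith
        have ht₀0 : 0 ≤ t₀ := by positivity
        have hC : (0:ℝ) < ((n₁+1).choose (m₁+1) : ℝ) := by
          exact_mod_cast Nat.choose_pos (by omega)
        have hA : (n₁.choose m₁ : ℝ) = p * ((n₁+1).choose (m₁+1) : ℝ) := by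
          have h' : ((n₁+1) * n₁.choose m₁ : ℕ) = ((n₁+1).choose (m₁+1) * (m₁+1) : ℕ) := by
            simpa [Nat.succ_eq_add_one] using Nat.add_one_mul_choose_eq n₁ m₁
          have h'' : ((n₁:ℝ)+1) * (n₁.choose m₁:ℝ) = ((n₁+1).choose (m₁+1):ℝ) * ((m₁:ℝ)+1) := by
            exact_mod_cast h'
          rw [hp]
          field_simp
          linarith [h'']
        have hB : (n₁.choose (m₁+1) : ℝ) = (1-p) * ((n₁+1).choose (m₁+1) : ℝ) := by
          have h' : ((n₁+1).choose (m₁+1) : ℝ) = (n₁.choose m₁ : ℝ) + (n₁.choose (m₁+1) : ℝ) := by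
            exact_mod_cast Nat.choose_succ_succ n₁ m₁
          rw [hA] at h'
          linarith
        have key := hoeff_pt p hp0 hp1 t₀
        set D : ℝ := s*(((m₁:ℝ)+1)/((n₁:ℝ)+1) - θ) + s^2/8 * E with hD
        have e1 : s*((m₁:ℝ)/(n₁:ℝ) - θ) + s^2/8 * E = (-((1-p)*t₀)) + D := by
          rw [hD, hp, ht₀]
          field_simp
          ring
        have e2 : s*(((m₁:ℝ)+1)/(n₁:ℝ) - θ) + s^2/8 * E = p*t₀ + D := by
          rw [hD, hp, ht₀]
          field_simp
          ring
        have e3 : s*((((m₁:ℝ))+1)/((n₁:ℝ)+1) - θ) + s^2/8 * (E + 1/(n₁:ℝ)^2)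
            = t₀^2/8 + D := by
          rw [hD, ht₀]
          field_simp
          ring
        have c1 : (((m₁+1:ℕ)):ℝ) = (m₁:ℝ)+1 := by push_cast; ring
        have c2 : (((n₁+1:ℕ)):ℝ) = (n₁:ℝ)+1 := by push_cast; ring
        have main : (n₁.choose m₁ : ℝ) * Real.exp (s*((m₁:ℝ)/(n₁:ℝ) - θ) + s^2/8 * E)
              + (n₁.choose (m₁+1) : ℝ) * Real.exp (s*(((m₁:ℝ)+1)/(n₁:ℝ) - θ) + s^2/8 * E)
            ≤ ((n₁+1).choose (m₁+1) : ℝ) *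
                Real.exp (s*((((m₁+1:ℕ)):ℝ)/(((n₁+1:ℕ)):ℝ) - θ) + s^2/8 * (E + 1/(n₁:ℝ)^2)) := by
          rw [c1, c2, hA, hB, e1, e2]
          have e3' : s*(((m₁:ℝ)+1)/((n₁:ℝ)+1) - θ) + s^2/8 * (E + 1/(n₁:ℝ)^2) = t₀^2/8 + D := e3
          rw [e3']
          exact combine _ p t₀ D (le_of_lt hC) key
        refine le_trans ?_ main
        push_cast
        push_cast at ih1 ih2
        linarith

lemma RgeS_add_not {n : ℕ} (v : Fin n → Bool) (t : ℕ) :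
    RgeS v t + RgeS (fun i => !(v i)) t = n - t := by
  classical
  have h := Finset.card_filter_add_card_filter_not
    (s := univ.filter (fun i : Fin n => t ≤ (i:ℕ))) (p := fun i => v i = true)
  rw [Finset.filter_filter, Finset.filter_filter] at h
  rw [card_ge] at h
  have h1 : RgeS v t = (univ.filter (fun i : Fin n => t ≤ (i:ℕ) ∧ v i = true)).card := rfl
  have h2 : RgeS (fun i => !(v i)) t
      = (univ.filter (fun i : Fin n => t ≤ (i:ℕ) ∧ ¬ (v i = true))).card := by
    unfold RgeS
    congr 1
    apply Finset.filter_congr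
    intro i _
    simp
  rw [h1, h2]
  convert h using 2

lemma cntS_add_not {n : ℕ} (v : Fin n → Bool) :
    cntS v + cntS (fun i => !(v i)) = n := by
  have h := RgeS_add_not v 0
  rw [RgeS_zero, RgeS_zero] at h
  simpa using h

set_option maxHeartbeats 1000000 in
lemma upper_bound (n' m : ℕ) (hn' : 1 ≤ n') (α : ℝ) (hα : 0 < α) :
    ((cfilter (fun v : Fin (2*n') → Bool =>
        cntS v = m ∧ ∃ t ≤ n',
          (m:ℝ)/((2*n':ℕ):ℝ) + α ≤ (RgeS v t : ℝ)/(((2*n':ℕ):ℝ)-(t:ℝ))) : ℕ) : ℝ)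
    ≤ ((2*n').choose m : ℝ) * Real.exp (-(α^2) * (2*(n':ℝ)) / 2) := by
  have hn'R : (0:ℝ) < (n':ℝ) := by exact_mod_cast hn'
  have hcore := core (4*α*n') (by positivity) n' (2*n') m (by omega)
    ((m:ℝ)/((2*n':ℕ):ℝ) + α)
  refine le_trans hcore ?_
  apply mul_le_mul_of_nonneg_left _ (Nat.cast_nonneg _)
  apply Real.exp_le_exp.mpr
  have hsumle : ∑ u ∈ Finset.range n', 1/(((2*n':ℕ):ℝ)-1-(u:ℝ))^2 ≤ (n':ℝ) * (1/(n':ℝ)^2) := by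
    have := Finset.sum_le_card_nsmul (Finset.range n')
      (fun u => 1/(((2*n':ℕ):ℝ)-1-(u:ℝ))^2) (1/(n':ℝ)^2) ?_
    · calc ∑ u ∈ Finset.range n', 1/(((2*n':ℕ):ℝ)-1-(u:ℝ))^2
          ≤ (Finset.range n').card • (1/(n':ℝ)^2) := this
        _ = (n':ℝ) * (1/(n':ℝ)^2) := by
            rw [Finset.card_range, nsmul_eq_mul]
    · intro u hu
      rw [Finset.mem_range] at hu
      have hu' : (u:ℝ) ≤ (n':ℝ) - 1 := by
        have : (u:ℝ) + 1 ≤ (n':ℝ) := by exact_mod_cast hu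
        linarith
      have hden : (n':ℝ) ≤ ((2*n':ℕ):ℝ)-1-(u:ℝ) := by
        push_cast
        linarith
      apply one_div_le_one_div_of_le (by positivity)
      apply pow_le_pow_left₀ (le_of_lt hn'R) hden
  have hterm : (4*α*(n':ℝ))^2/8 * ((n':ℝ) * (1/(n':ℝ)^2)) = 2*α^2*(n':ℝ) := by
    field_simp
    ring
  have hmain : (4*α*(n':ℝ)) * ((m:ℝ)/((2*n':ℕ):ℝ) - ((m:ℝ)/((2*n':ℕ):ℝ) + α)) = -(4*α^2*(n':ℝ)) := by
    ring
  calc (4*α*(n':ℝ)) * ((m:ℝ)/((2*n':ℕ):ℝ) - ((m:ℝ)/((2*n':ℕ):ℝ) + α))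
        + (4*α*(n':ℝ))^2/8 * ∑ u ∈ Finset.range n', 1/(((2*n':ℕ):ℝ)-1-(u:ℝ))^2
      ≤ -(4*α^2*(n':ℝ)) + 2*α^2*(n':ℝ) := by
        rw [hmain]
        have h8 : (0:ℝ) ≤ (4*α*(n':ℝ))^2/8 := by positivity
        have := mul_le_mul_of_nonneg_left hsumle h8
        rw [hterm] at this
        linarith
    _ ≤ -(α^2) * (2*(n':ℝ)) / 2 := by nlinarith [sq_nonneg α]

lemma cfilter_equiv {α β : Type*} [Fintype α] [Fintype β] (e : α ≃ β) (P : β → Prop) :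
    cfilter (fun a => P (e a)) = cfilter P := by
  classical
  rw [cfilter_eq, cfilter_eq]
  apply Finset.card_nbij' e e.symm
  · intro a ha
    rw [Finset.mem_coe, Finset.mem_filter] at ha ⊢
    exact ⟨Finset.mem_univ _, ha.2⟩
  · intro b hb
    rw [Finset.mem_coe, Finset.mem_filter] at hb ⊢
    refine ⟨Finset.mem_univ _, ?_⟩
    simpa using hb.2
  · intro a _; simp
  · intro b _; simp

set_option maxHeartbeats 1000000 in
lemma lower_bound (n' m : ℕ) (hn' : 1 ≤ n') (α : ℝ) (hα : 0 < α) :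
    ((cfilter (fun v : Fin (2*n') → Bool =>
        cntS v = m ∧ ∃ t ≤ n',
          (RgeS v t : ℝ)/(((2*n':ℕ):ℝ)-(t:ℝ)) ≤ (m:ℝ)/((2*n':ℕ):ℝ) - α) : ℕ) : ℝ)
    ≤ ((2*n').choose m : ℝ) * Real.exp (-(α^2) * (2*(n':ℝ)) / 2) := by
  by_cases hm : m ≤ 2*n'
  swap
  · rw [cfilter_zero (by
      rintro v ⟨hc, _⟩
      exact hm (hc ▸ cntS_le v))]
    simp only [Nat.cast_zero]
    positivity
  have hNpos : (0:ℝ) < ((2*n':ℕ):ℝ) := by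
    have : 0 < 2*n' := by omega
    exact_mod_cast this
  let e : (Fin (2*n') → Bool) ≃ (Fin (2*n') → Bool) :=
    Function.Involutive.toPerm (fun v => fun i => !(v i)) (by intro v; funext i; simp)
  have hbij := cfilter_equiv e (fun v : Fin (2*n') → Bool =>
      cntS v = m ∧ ∃ t ≤ n',
        (RgeS v t : ℝ)/(((2*n':ℕ):ℝ)-(t:ℝ)) ≤ (m:ℝ)/((2*n':ℕ):ℝ) - α)
  rw [← hbij]
  have hiff : ∀ v : Fin (2*n') → Bool,
      (cntS (e v) = m ∧ ∃ t ≤ n',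
        (RgeS (e v) t : ℝ)/(((2*n':ℕ):ℝ)-(t:ℝ)) ≤ (m:ℝ)/((2*n':ℕ):ℝ) - α)
      ↔ (cntS v = 2*n' - m ∧ ∃ t ≤ n',
        ((2*n'-m:ℕ):ℝ)/((2*n':ℕ):ℝ) + α ≤ (RgeS v t : ℝ)/(((2*n':ℕ):ℝ)-(t:ℝ))) := by
    intro v
    have hcnt := cntS_add_not v
    have hcnt' : cntS (e v) = cntS (fun i => !(v i)) := rfl
    have hMv : (m:ℝ) ≤ ((2*n':ℕ):ℝ) := by exact_mod_cast hm
    have h2n : ((2*n':ℕ):ℝ) = 2*(n':ℝ) := by push_cast; ring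
    have hsub : ((2*n'-m:ℕ):ℝ) = ((2*n':ℕ):ℝ) - (m:ℝ) := by
      have h0 : (2*n'-m) + m = 2*n' := by omega
      have h1 := congrArg (fun k : ℕ => (k:ℝ)) h0
      push_cast at h1
      linarith [h2n]
    have hn'R : (1:ℝ) ≤ (n':ℝ) := by exact_mod_cast hn'
    have hev : ∀ t, RgeS (e v) t = RgeS (fun i => !(v i)) t := fun t => rfl
    have hRc : ∀ t, t ≤ n' →
        (RgeS v t : ℝ) + (RgeS (fun i => !(v i)) t : ℝ) = ((2*n':ℕ):ℝ)-(t:ℝ) := by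
      intro t ht
      have hR := RgeS_add_not v t
      have h9 : RgeS v t + RgeS (fun i => !(v i)) t + t = 2*n' := by omega
      have h10 := congrArg (fun k : ℕ => (k:ℝ)) h9
      push_cast at h10
      linarith [h2n]
    constructor
    · rintro ⟨hc, t, ht, hle⟩
      rw [hcnt'] at hc
      have htN : (t:ℝ) ≤ (n':ℝ) := by exact_mod_cast ht
      have hD : (0:ℝ) < ((2*n':ℕ):ℝ)-(t:ℝ) := by rw [h2n]; linarith
      refine ⟨by omega, t, ht, ?_⟩
      rw [hev t] at hle
      have hEq : (RgeS (fun i => !(v i)) t : ℝ) = (((2*n':ℕ):ℝ)-(t:ℝ)) - (RgeS v t : ℝ) := by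
        linarith [hRc t ht]
      rw [hEq, sub_div, div_self (ne_of_gt hD)] at hle
      rw [hsub, sub_div, div_self (ne_of_gt hNpos)]
      linarith
    · rintro ⟨hc, t, ht, hle⟩
      have htN : (t:ℝ) ≤ (n':ℝ) := by exact_mod_cast ht
      have hD : (0:ℝ) < ((2*n':ℕ):ℝ)-(t:ℝ) := by rw [h2n]; linarith
      refine ⟨by rw [hcnt']; omega, t, ht, ?_⟩
      rw [hev t]
      have hEq : (RgeS (fun i => !(v i)) t : ℝ) = (((2*n':ℕ):ℝ)-(t:ℝ)) - (RgeS v t : ℝ) := by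
        linarith [hRc t ht]
      rw [hEq, sub_div, div_self (ne_of_gt hD)]
      rw [hsub, sub_div, div_self (ne_of_gt hNpos)] at hle
      linarith
  rw [cfilter_congr hiff]
  have := upper_bound n' (2*n'-m) hn' α hα
  refine le_trans this ?_
  rw [Nat.choose_symm hm]

lemma cntS_comp_perm {n : ℕ} (f : Fin n → Bool) (σ : Equiv.Perm (Fin n)) :
    cntS (fun i => f (σ i)) = cntS f := by
  unfold cntS
  rw [Finset.card_filter, Finset.card_filter]
  exact Equiv.sum_comp σ (fun a => if f a = true then 1 else 0)

lemma exists_perm {n : ℕ} (v w : Fin n → Bool) (h : cntS v = cntS w) :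
    ∃ τ : Equiv.Perm (Fin n), ∀ i, v (τ i) = w i := by
  classical
  have hcv : Fintype.card {i : Fin n // v i = true} = cntS v := Fintype.card_subtype _
  have hcw : Fintype.card {i : Fin n // w i = true} = cntS w := Fintype.card_subtype _
  have h1 : Fintype.card {i : Fin n // w i = true} = Fintype.card {i : Fin n // v i = true} := by
    rw [hcv, hcw, h]
  have h2 : Fintype.card {i : Fin n // ¬ w i = true} = Fintype.card {i : Fin n // ¬ v i = true} := by
    rw [Fintype.card_subtype_compl, Fintype.card_subtype_compl, h1]
  let e1 : {i : Fin n // w i = true} ≃ {i : Fin n // v i = true} := Fintype.equivOfCardEq h1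
  let e0 : {i : Fin n // ¬ w i = true} ≃ {i : Fin n // ¬ v i = true} := Fintype.equivOfCardEq h2
  refine ⟨(Equiv.sumCompl (fun i => w i = true)).symm.trans
    ((Equiv.sumCongr e1 e0).trans (Equiv.sumCompl (fun i => v i = true))), ?_⟩
  intro i
  by_cases hw : w i = true
  · have : (Equiv.sumCompl (fun i => w i = true)).symm i = Sum.inl ⟨i, hw⟩ :=
      Equiv.sumCompl_symm_apply_of_pos (p := fun i : Fin n => w i = true) hw
    simp only [Equiv.trans_apply, this, Equiv.sumCongr_apply, Sum.map_inl,
      Equiv.sumCompl_apply_inl]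
    rw [(e1 ⟨i, hw⟩).2, hw]
  · have : (Equiv.sumCompl (fun i => w i = true)).symm i = Sum.inr ⟨i, hw⟩ :=
      Equiv.sumCompl_symm_apply_of_neg (p := fun i : Fin n => w i = true) hw
    simp only [Equiv.trans_apply, this, Equiv.sumCongr_apply, Sum.map_inr,
      Equiv.sumCompl_apply_inr]
    have h3 := (e0 ⟨i, hw⟩).2
    have h4 : w i = false := by simpa using hw
    have h5 : v ((e0 ⟨i, hw⟩) : Fin n) = false := by simpa using h3
    rw [h4, h5]

lemma fiber_const {n : ℕ} (f v w : Fin n → Bool) (hv : cntS v = cntS f) (hw : cntS w = cntS f) :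
    cfilter (fun σ : Equiv.Perm (Fin n) => (fun i => f (σ i)) = v)
      = cfilter (fun σ : Equiv.Perm (Fin n) => (fun i => f (σ i)) = w) := by
  obtain ⟨τ, hτ⟩ := exists_perm v w (by rw [hv, hw])
  let e : Equiv.Perm (Fin n) ≃ Equiv.Perm (Fin n) :=
    ⟨fun σ => τ.trans σ, fun σ => τ.symm.trans σ,
     fun σ => by ext i; simp, fun σ => by ext i; simp⟩
  have h1 : ∀ σ : Equiv.Perm (Fin n),
      ((fun i => f ((e σ) i)) = w) ↔ ((fun i => f (σ i)) = v) := by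
    intro σ
    constructor
    · intro hh
      funext j
      have := congrFun hh (τ.symm j)
      simp only [e, Equiv.trans_apply, Equiv.coe_fn_mk] at this
      rw [Equiv.apply_symm_apply] at this
      rw [this, ← hτ (τ.symm j), Equiv.apply_symm_apply]
    · intro hh
      funext i
      have := congrFun hh (τ i)
      simp only [e, Equiv.trans_apply, Equiv.coe_fn_mk]
      rw [this, hτ i]
  calc cfilter (fun σ : Equiv.Perm (Fin n) => (fun i => f (σ i)) = v)
      = cfilter (fun σ : Equiv.Perm (Fin n) => (fun i => f ((e σ) i)) = w) := by
        apply cfilter_congr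
        intro σ
        exact (h1 σ).symm
    _ = cfilter (fun σ : Equiv.Perm (Fin n) => (fun i => f (σ i)) = w) := by
        exact cfilter_equiv e (fun σ : Equiv.Perm (Fin n) => (fun i => f (σ i)) = w)

set_option maxHeartbeats 1000000 in
lemma perm_transfer {n : ℕ} (f : Fin n → Bool) (E : (Fin n → Bool) → Prop) :
    cfilter (fun σ : Equiv.Perm (Fin n) => E (fun i => f (σ i))) * (n.choose (cntS f))
      = cfilter (fun v : Fin n → Bool => cntS v = cntS f ∧ E v) * (n.factorial) := by
  classical
  have h1 : cfilter (fun σ : Equiv.Perm (Fin n) => E (fun i => f (σ i)))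
      = ∑ v ∈ univ.filter (fun v : Fin n → Bool => cntS v = cntS f ∧ E v),
          cfilter (fun σ : Equiv.Perm (Fin n) => (fun i => f (σ i)) = v) := by
    rw [cfilter_eq]
    have hmem : ∀ σ ∈ (univ.filter (fun σ : Equiv.Perm (Fin n) => E (fun i => f (σ i)))),
        (fun i => f (σ i)) ∈ univ.filter (fun v : Fin n → Bool => cntS v = cntS f ∧ E v) := by
      intro σ hσ
      rw [Finset.mem_filter] at hσ ⊢
      exact ⟨Finset.mem_univ _, cntS_comp_perm f σ, hσ.2⟩
    rw [Finset.card_eq_sum_card_fiberwise hmem]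
    apply Finset.sum_congr rfl
    intro v hv
    rw [Finset.mem_filter] at hv
    rw [cfilter_eq]
    congr 1
    rw [Finset.filter_filter]
    apply Finset.filter_congr
    intro σ _
    constructor
    · rintro ⟨_, h⟩; exact h
    · intro h; exact ⟨by rw [h]; exact hv.2.2, h⟩
  have h2 : (n.factorial)
      = ∑ v ∈ univ.filter (fun v : Fin n → Bool => cntS v = cntS f),
          cfilter (fun σ : Equiv.Perm (Fin n) => (fun i => f (σ i)) = v) := by
    have := Finset.card_eq_sum_card_fiberwise
      (s := (univ : Finset (Equiv.Perm (Fin n))))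
      (f := fun σ : Equiv.Perm (Fin n) => fun i => f (σ i))
      (t := univ.filter (fun v : Fin n → Bool => cntS v = cntS f))
      (fun σ _ => by
        rw [Finset.mem_coe, Finset.mem_filter]
        exact ⟨Finset.mem_univ _, cntS_comp_perm f σ⟩)
    rw [card_univ, Fintype.card_perm, Fintype.card_fin] at this
    rw [this]
    apply Finset.sum_congr rfl
    intro v hv
    rw [cfilter_eq]
  set F := cfilter (fun σ : Equiv.Perm (Fin n) => (fun i => f (σ i)) = f) with hF
  have h1' : cfilter (fun σ : Equiv.Perm (Fin n) => E (fun i => f (σ i)))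
      = (univ.filter (fun v : Fin n → Bool => cntS v = cntS f ∧ E v)).card * F := by
    have hc1 : ∑ v ∈ univ.filter (fun v : Fin n → Bool => cntS v = cntS f ∧ E v),
        cfilter (fun σ : Equiv.Perm (Fin n) => (fun i => f (σ i)) = v)
        = ∑ _v ∈ univ.filter (fun v : Fin n → Bool => cntS v = cntS f ∧ E v), F :=
      Finset.sum_congr rfl (fun v hv => by
        rw [Finset.mem_filter] at hv
        exact fiber_const f v f hv.2.1 rfl)
    rw [h1, hc1, Finset.sum_const, smul_eq_mul]
  have h2' : (n.factorial) = (n.choose (cntS f)) * F := by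
    have hc2 : ∑ v ∈ univ.filter (fun v : Fin n → Bool => cntS v = cntS f),
        cfilter (fun σ : Equiv.Perm (Fin n) => (fun i => f (σ i)) = v)
        = ∑ _v ∈ univ.filter (fun v : Fin n → Bool => cntS v = cntS f), F :=
      Finset.sum_congr rfl (fun v hv => by
        rw [Finset.mem_filter] at hv
        exact fiber_const f v f hv.2 rfl)
    rw [h2, hc2, Finset.sum_const, smul_eq_mul, cnt_card]
  rw [h1', h2']
  rw [cfilter_eq]
  ring

lemma cfilter_exists {α ι : Type*} [Fintype α] [Fintype ι] (Q : ι → α → Prop) :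
    cfilter (fun a => ∃ j : ι, Q j a) ≤ ∑ j : ι, cfilter (Q j) := by
  classical
  rw [cfilter_eq]
  have hsub : univ.filter (fun a => ∃ j : ι, Q j a)
      ⊆ Finset.biUnion univ (fun j => univ.filter (Q j)) := by
    intro a ha
    rw [Finset.mem_filter] at ha
    obtain ⟨j, hj⟩ := ha.2
    rw [Finset.mem_biUnion]
    exact ⟨j, Finset.mem_univ _, by rw [Finset.mem_filter]; exact ⟨Finset.mem_univ _, hj⟩⟩
  calc (univ.filter (fun a => ∃ j : ι, Q j a)).card
      ≤ (Finset.biUnion univ (fun j => univ.filter (Q j))).card := Finset.card_le_card hsub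
    _ ≤ ∑ j : ι, (univ.filter (Q j)).card := Finset.card_biUnion_le
    _ = ∑ j : ι, cfilter (Q j) := by
        apply Finset.sum_congr rfl
        intro j _
        rw [cfilter_eq]

lemma cfilter_or {α : Type*} [Fintype α] (P Q : α → Prop) :
    cfilter (fun a => P a ∨ Q a) ≤ cfilter P + cfilter Q := by
  classical
  rw [cfilter_eq, cfilter_eq, cfilter_eq]
  have hsub : univ.filter (fun a => P a ∨ Q a) ⊆ univ.filter P ∪ univ.filter Q := by
    intro a ha
    rw [Finset.mem_filter] at ha
    rw [Finset.mem_union, Finset.mem_filter, Finset.mem_filter]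
    rcases ha.2 with h | h
    · exact Or.inl ⟨ha.1, h⟩
    · exact Or.inr ⟨ha.1, h⟩
  calc (univ.filter (fun a => P a ∨ Q a)).card
      ≤ (univ.filter P ∪ univ.filter Q).card := Finset.card_le_card hsub
    _ ≤ _ := Finset.card_union_le _ _


set_option maxHeartbeats 2000000 in
lemma part1 : ∀ (B n' : ℕ), 2 ≤ B → 1 ≤ n' → ∀ (x : Fin (2 * n') → Fin B) (α : ℝ), 0 < α →
    badProb B n' x α ≤ 2 * (B : ℝ) * Real.exp (-(α ^ 2) * (2 * (n' : ℝ)) / 2) := by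
  intro B n' hB hn' x α hα
  classical
  have hNc : ((2*n':ℕ):ℝ) = 2*(n':ℝ) := by push_cast; ring
  set f : Fin B → Fin (2*n') → Bool := fun j a => decide ((x a : ℕ) ≤ (j:ℕ)) with hf
  have hfact : (0:ℝ) < ((2*n').factorial : ℝ) := by exact_mod_cast (2*n').factorial_pos
  set X : ℝ := Real.exp (-(α^2) * (2*(n':ℝ)) / 2) with hX
  have hX0 : 0 < X := Real.exp_pos _
  -- pCDF identities
  have hnum : ∀ (σ : Equiv.Perm (Fin (2*n'))) (t : ℕ) (j : Fin B),
      pCDF B n' x σ t j = (RgeS (fun i => f j (σ i)) t : ℝ)/(2*(n':ℝ) - (t:ℝ)) := by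
    intro σ t j
    unfold pCDF
    have hcard : (Finset.univ.filter
        (fun i : Fin (2*n') => t ≤ (i : ℕ) ∧ ((x (σ i)) : ℕ) ≤ (j : ℕ))).card
        = RgeS (fun i => f j (σ i)) t := by
      unfold RgeS
      apply congrArg Finset.card
      apply Finset.filter_congr
      intro i _
      simp [hf]
    rw [hcard]
  have hzero : ∀ (σ : Equiv.Perm (Fin (2*n'))) (j : Fin B),
      pCDF B n' x σ 0 j = (cntS (f j) : ℝ)/(2*(n':ℝ)) := by
    intro σ j
    rw [hnum σ 0 j, RgeS_zero, cntS_comp_perm]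
    norm_num
  -- the per-j events on sequences
  set Eup : Fin B → (Fin (2*n') → Bool) → Prop := fun j v => ∃ t ≤ n',
      (cntS (f j):ℝ)/((2*n':ℕ):ℝ) + α ≤ (RgeS v t : ℝ)/(((2*n':ℕ):ℝ)-(t:ℝ)) with hEup
  set Elow : Fin B → (Fin (2*n') → Bool) → Prop := fun j v => ∃ t ≤ n',
      (RgeS v t : ℝ)/(((2*n':ℕ):ℝ)-(t:ℝ)) ≤ (cntS (f j):ℝ)/((2*n':ℕ):ℝ) - α with hElow
  -- implication from the bad event
  have himp : ∀ σ : Equiv.Perm (Fin (2*n')),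
      (∃ j : Fin B, ∃ t ≤ n', α ≤ |pCDF B n' x σ t j - pCDF B n' x σ 0 j|) →
      (∃ j : Fin B, Eup j (fun i => f j (σ i)) ∨ Elow j (fun i => f j (σ i))) := by
    intro σ ⟨j, t, ht, habs⟩
    refine ⟨j, ?_⟩
    rw [hnum σ t j, hzero σ j] at habs
    rw [le_abs] at habs
    rcases habs with h | h
    · left
      refine ⟨t, ht, ?_⟩
      rw [hNc]
      linarith
    · right
      refine ⟨t, ht, ?_⟩
      rw [hNc]
      linarith
  -- per-j bounds on permutation counts
  have hperm : ∀ j : Fin B,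
      ((cfilter (fun σ : Equiv.Perm (Fin (2*n')) => Eup j (fun i => f j (σ i))) : ℕ) : ℝ)
        ≤ X * ((2*n').factorial : ℝ) := by
    intro j
    have htr := perm_transfer (f j) (Eup j)
    have hub := upper_bound n' (cntS (f j)) hn' α hα
    have hCpos : (0:ℝ) < ((2*n').choose (cntS (f j)) : ℝ) := by
      exact_mod_cast Nat.choose_pos (cntS_le (f j))
    have htr' : ((cfilter (fun σ : Equiv.Perm (Fin (2*n')) => Eup j (fun i => f j (σ i))) : ℕ) : ℝ)
        * ((2*n').choose (cntS (f j)) : ℝ)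
        = ((cfilter (fun v : Fin (2*n') → Bool => cntS v = cntS (f j) ∧ Eup j v) : ℕ) : ℝ)
          * ((2*n').factorial : ℝ) := by
      exact_mod_cast congrArg (fun k : ℕ => (k:ℝ)) htr
    have h2 : ((cfilter (fun v : Fin (2*n') → Bool => cntS v = cntS (f j) ∧ Eup j v) : ℕ) : ℝ)
        ≤ ((2*n').choose (cntS (f j)) : ℝ) * X := hub
    have h3 := mul_le_mul_of_nonneg_right h2 (le_of_lt hfact)
    rw [← htr'] at h3
    have h4 : ((2*n').choose (cntS (f j)) : ℝ) * X * ((2*n').factorial : ℝ)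
        = (X * ((2*n').factorial : ℝ)) * ((2*n').choose (cntS (f j)) : ℝ) := by ring
    rw [h4] at h3
    exact le_of_mul_le_mul_right h3 hCpos
  have hperm' : ∀ j : Fin B,
      ((cfilter (fun σ : Equiv.Perm (Fin (2*n')) => Elow j (fun i => f j (σ i))) : ℕ) : ℝ)
        ≤ X * ((2*n').factorial : ℝ) := by
    intro j
    have htr := perm_transfer (f j) (Elow j)
    have hub := lower_bound n' (cntS (f j)) hn' α hα
    have hCpos : (0:ℝ) < ((2*n').choose (cntS (f j)) : ℝ) := by
      exact_mod_cast Nat.choose_pos (cntS_le (f j))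
    have htr' : ((cfilter (fun σ : Equiv.Perm (Fin (2*n')) => Elow j (fun i => f j (σ i))) : ℕ) : ℝ)
        * ((2*n').choose (cntS (f j)) : ℝ)
        = ((cfilter (fun v : Fin (2*n') → Bool => cntS v = cntS (f j) ∧ Elow j v) : ℕ) : ℝ)
          * ((2*n').factorial : ℝ) := by
      exact_mod_cast congrArg (fun k : ℕ => (k:ℝ)) htr
    have h2 : ((cfilter (fun v : Fin (2*n') → Bool => cntS v = cntS (f j) ∧ Elow j v) : ℕ) : ℝ)
        ≤ ((2*n').choose (cntS (f j)) : ℝ) * X := hub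
    have h3 := mul_le_mul_of_nonneg_right h2 (le_of_lt hfact)
    rw [← htr'] at h3
    have h4 : ((2*n').choose (cntS (f j)) : ℝ) * X * ((2*n').factorial : ℝ)
        = (X * ((2*n').factorial : ℝ)) * ((2*n').choose (cntS (f j)) : ℝ) := by ring
    rw [h4] at h3
    exact le_of_mul_le_mul_right h3 hCpos
  -- union bound
  have hunion : ((cfilter (fun σ : Equiv.Perm (Fin (2*n')) =>
      ∃ j : Fin B, ∃ t ≤ n', α ≤ |pCDF B n' x σ t j - pCDF B n' x σ 0 j|) : ℕ) : ℝ)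
      ≤ 2 * (B:ℝ) * X * ((2*n').factorial : ℝ) := by
    have hu1 : cfilter (fun σ : Equiv.Perm (Fin (2*n')) =>
        ∃ j : Fin B, ∃ t ≤ n', α ≤ |pCDF B n' x σ t j - pCDF B n' x σ 0 j|)
        ≤ cfilter (fun σ : Equiv.Perm (Fin (2*n')) =>
          ∃ j : Fin B, Eup j (fun i => f j (σ i)) ∨ Elow j (fun i => f j (σ i))) :=
      cfilter_mono himp
    have hu2 := cfilter_exists (ι := Fin B) (fun j (σ : Equiv.Perm (Fin (2*n'))) =>
        Eup j (fun i => f j (σ i)) ∨ Elow j (fun i => f j (σ i)))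
    have hu3 : ∀ j : Fin B, cfilter (fun σ : Equiv.Perm (Fin (2*n')) =>
        Eup j (fun i => f j (σ i)) ∨ Elow j (fun i => f j (σ i)))
        ≤ cfilter (fun σ : Equiv.Perm (Fin (2*n')) => Eup j (fun i => f j (σ i)))
          + cfilter (fun σ : Equiv.Perm (Fin (2*n')) => Elow j (fun i => f j (σ i))) :=
      fun j => cfilter_or _ _
    have hn1 : ((cfilter (fun σ : Equiv.Perm (Fin (2*n')) =>
        ∃ j : Fin B, ∃ t ≤ n', α ≤ |pCDF B n' x σ t j - pCDF B n' x σ 0 j|) : ℕ) : ℝ)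
        ≤ ∑ j : Fin B,
          (((cfilter (fun σ : Equiv.Perm (Fin (2*n')) => Eup j (fun i => f j (σ i))) : ℕ) : ℝ)
          + ((cfilter (fun σ : Equiv.Perm (Fin (2*n')) => Elow j (fun i => f j (σ i))) : ℕ) : ℝ)) := by
      have hchain := le_trans hu1 (le_trans hu2 (Finset.sum_le_sum (fun j _ => hu3 j)))
      calc ((cfilter (fun σ : Equiv.Perm (Fin (2*n')) =>
          ∃ j : Fin B, ∃ t ≤ n', α ≤ |pCDF B n' x σ t j - pCDF B n' x σ 0 j|) : ℕ) : ℝ)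
          ≤ ((∑ j : Fin B,
            (cfilter (fun σ : Equiv.Perm (Fin (2*n')) => Eup j (fun i => f j (σ i)))
            + cfilter (fun σ : Equiv.Perm (Fin (2*n')) => Elow j (fun i => f j (σ i)))) : ℕ) : ℝ) := by
            exact_mod_cast hchain
        _ = _ := by push_cast; ring
    refine le_trans hn1 ?_
    calc ∑ j : Fin B,
          (((cfilter (fun σ : Equiv.Perm (Fin (2*n')) => Eup j (fun i => f j (σ i))) : ℕ) : ℝ)
          + ((cfilter (fun σ : Equiv.Perm (Fin (2*n')) => Elow j (fun i => f j (σ i))) : ℕ) : ℝ))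
        ≤ ∑ _j : Fin B, (X * ((2*n').factorial : ℝ) + X * ((2*n').factorial : ℝ)) :=
          Finset.sum_le_sum (fun j _ => add_le_add (hperm j) (hperm' j))
      _ = (B:ℝ) * (X * ((2*n').factorial : ℝ) + X * ((2*n').factorial : ℝ)) := by
          rw [Finset.sum_const, Finset.card_univ, Fintype.card_fin, nsmul_eq_mul]
      _ = 2 * (B:ℝ) * X * ((2*n').factorial : ℝ) := by ring
  -- conclude
  unfold badProb
  have hcardu : ((Finset.univ : Finset (Equiv.Perm (Fin (2*n')))).card : ℝ)
      = ((2*n').factorial : ℝ) := by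
    rw [Finset.card_univ, Fintype.card_perm, Fintype.card_fin]
  rw [hcardu]
  rw [div_le_iff₀ hfact]
  have hre : ((Finset.univ.filter (fun σ : Equiv.Perm (Fin (2 * n')) =>
      ∃ j : Fin B, ∃ t ≤ n', α ≤ |pCDF B n' x σ t j - pCDF B n' x σ 0 j|)).card : ℕ)
      = cfilter (fun σ : Equiv.Perm (Fin (2*n')) =>
      ∃ j : Fin B, ∃ t ≤ n', α ≤ |pCDF B n' x σ t j - pCDF B n' x σ 0 j|) :=
    (cfilter_eq _).symm
  rw [hre]
  calc ((cfilter (fun σ : Equiv.Perm (Fin (2*n')) =>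
      ∃ j : Fin B, ∃ t ≤ n', α ≤ |pCDF B n' x σ t j - pCDF B n' x σ 0 j|) : ℕ) : ℝ)
      ≤ 2 * (B:ℝ) * X * ((2*n').factorial : ℝ) := hunion
    _ = 2 * (B:ℝ) * Real.exp (-(α ^ 2) * (2 * (n' : ℝ)) / 2) * ((2*n').factorial : ℝ) := by
        rw [hX]


/-- with `n = 2 * n'` users, the probability that the empirical CDF of the
remaining users after removing the first `t ≤ n/2` (in a uniformly random order) deviates
anywhere by at least `α` from the initial empirical CDF is at most `2B·exp(-α²n/2)`;
in particular, if `n ≥ C·log B/α²` for a sufficiently large constant `C`, this failure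
probability is at most `B^{-λ}`, where `λ` can be made arbitrarily large by increasing `C`. -/
theorem stmt_3 :
    (∀ (B n' : ℕ), 2 ≤ B → 1 ≤ n' → ∀ (x : Fin (2 * n') → Fin B) (α : ℝ), 0 < α →
      badProb B n' x α ≤ 2 * (B : ℝ) * Real.exp (-(α ^ 2) * (2 * (n' : ℝ)) / 2))
    ∧ (∀ lam : ℝ, 0 < lam → ∃ C : ℝ, 0 < C ∧
        ∀ (B n' : ℕ), 2 ≤ B → 1 ≤ n' → ∀ (x : Fin (2 * n') → Fin B) (α : ℝ), 0 < α →
          C * Real.log B / α ^ 2 ≤ 2 * (n' : ℝ) →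
          badProb B n' x α ≤ (B : ℝ) ^ (-lam)) := by
  refine ⟨part1, ?_⟩
  intro lam hlam
  refine ⟨2*lam + 6, by linarith, ?_⟩
  intro B n' hB hn' x α hα hC
  have hB0 : (0:ℝ) < (B:ℝ) := by
    have : (0:ℕ) < B := by omega
    exact_mod_cast this
  have hB1 : (1:ℝ) < (B:ℝ) := by
    have : (1:ℕ) < B := by omega
    exact_mod_cast this
  have hB2 : (2:ℝ) ≤ (B:ℝ) := by exact_mod_cast hB
  have hlog : 0 < Real.log B := Real.log_pos hB1
  have hα2 : (0:ℝ) < α^2 := by positivity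
  have hC' : (2*lam + 6) * Real.log B ≤ α^2 * (2 * (n':ℝ)) := by
    rw [div_le_iff₀ hα2] at hC
    linarith [hC]
  have hexp : -(α ^ 2) * (2 * (n' : ℝ)) / 2 ≤ -((lam + 3) * Real.log B) := by
    nlinarith
  have h1 := part1 B n' hB hn' x α hα
  have h2 : Real.exp (-(α ^ 2) * (2 * (n' : ℝ)) / 2) ≤ Real.exp (-((lam+3) * Real.log B)) :=
    Real.exp_le_exp.mpr hexp
  have h3 : Real.exp (-((lam+3) * Real.log B)) = (B:ℝ) ^ (-(lam+3)) := by
    rw [Real.rpow_def_of_pos hB0]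
    congr 1
    ring
  have h4 : 2 * (B:ℝ) * (B:ℝ) ^ (-(lam+3)) ≤ (B:ℝ) ^ (-lam) := by
    have e1 : (B:ℝ) * (B:ℝ) ^ (-(lam+3)) = (B:ℝ) ^ ((1:ℝ) + (-(lam+3))) := by
      rw [Real.rpow_add hB0, Real.rpow_one]
    have e2 : (1:ℝ) + (-(lam+3)) = (-lam) + (-(2:ℝ)) := by ring
    have e3 : (B:ℝ) ^ ((-lam) + (-(2:ℝ))) = (B:ℝ) ^ (-lam) * (B:ℝ) ^ (-(2:ℝ)) :=
      Real.rpow_add hB0 _ _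
    have e4 : (B:ℝ) ^ (-(2:ℝ)) = 1 / (B:ℝ)^(2:ℕ) := by
      rw [Real.rpow_neg (le_of_lt hB0)]
      rw [show ((2:ℝ)) = ((2:ℕ):ℝ) by norm_num, Real.rpow_natCast]
      rw [one_div]
    have e5 : 2 * ((B:ℝ) ^ (-(2:ℝ))) ≤ 1 := by
      rw [e4]
      rw [mul_one_div, div_le_one (by positivity)]
      nlinarith
    calc 2 * (B:ℝ) * (B:ℝ) ^ (-(lam+3)) = 2 * ((B:ℝ) ^ (-lam) * (B:ℝ) ^ (-(2:ℝ))) := by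
          rw [mul_assoc, e1, e2, e3]
      _ = (B:ℝ) ^ (-lam) * (2 * (B:ℝ) ^ (-(2:ℝ))) := by ring
      _ ≤ (B:ℝ) ^ (-lam) * 1 := by
          apply mul_le_mul_of_nonneg_left e5 (le_of_lt (Real.rpow_pos_of_pos hB0 _))
      _ = (B:ℝ) ^ (-lam) := mul_one _
  calc badProb B n' x α ≤ 2 * (B : ℝ) * Real.exp (-(α ^ 2) * (2 * (n' : ℝ)) / 2) := h1
    _ ≤ 2 * (B:ℝ) * (B:ℝ) ^ (-(lam+3)) := by
        rw [← h3]
        apply mul_le_mul_of_nonneg_left h2 (by positivity)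
    _ ≤ (B:ℝ) ^ (-lam) := h4
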